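/- Suppose α > 0, 0 < Q* < Q_max, and S > (Q*/α)/(Q_max − Q*). Then there exists a unique Λ > 0 such that Λ·Q*/α = S·(1 − exp(−Λ·(Q_max − Q*))). -/

import Mathlib

/-- No two distinct positive roots: core convexity argument. -/
lemma stmt14_aux (c d S a b : ℝ) (hS : 0 < S) (hd : 0 < d)
    (ha : 0 < a) (hab : a < b)
    (h1 : a * c = S * (1 - Real.exp (-a * d)))
    (h2 : b * c = S * (1 - Real.exp (-b * d))) : False := by
  have hb : 0 < b := ha.trans hab
  set t := a / b with htdef
  have ht0 : 0 < t := div_pos ha hb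
  have ht1 : t < 1 := (div_lt_one hb).2 hab
  have hne : (-b * d) ≠ (0 : ℝ) := by nlinarith
  have hconv := strictConvexOn_exp.2 (Set.mem_univ (-b * d)) (Set.mem_univ (0 : ℝ))
    hne ht0 (by linarith : (0:ℝ) < 1 - t) (by ring)
  have htb : t * b = a := div_mul_cancel₀ a hb.ne'
  have hta : t • (-b * d) + (1 - t) • (0 : ℝ) = -a * d := by
    simp only [smul_eq_mul]
    nlinarith [htb]
  rw [hta, Real.exp_zero] at hconv
  simp only [smul_eq_mul, mul_one] at hconv
  have h3 : S * Real.exp (-a * d) < S * (t * Real.exp (-b * d) + (1 - t)) :=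
    mul_lt_mul_of_pos_left hconv hS
  have h4 : t * (b * c) = t * (S * (1 - Real.exp (-b * d))) := by rw [h2]
  have h5 : t * b * c = a * c := by rw [htb]
  nlinarith [h1, h3, h4, h5]

/-- Existence and uniqueness of the strictly positive right gain `Λ_r` of the softened
bang–bang controller. -/
theorem stmt14
    (Qs α Qmax S : ℝ)
    (hα : 0 < α) (hQs : 0 < Qs) (hQmax : Qs < Qmax)
    (hS : (Qs / α) / (Qmax - Qs) < S) :
    ∃! Λ : ℝ, 0 < Λ ∧
      Λ * Qs / α = S * (1 - Real.exp (-Λ * (Qmax - Qs))) := by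
  set c : ℝ := Qs / α with hcdef
  set d : ℝ := Qmax - Qs with hddef
  have hd : 0 < d := by simp only [hddef]; linarith
  have hc : 0 < c := div_pos hQs hα
  have hS0 : 0 < S := lt_trans (div_pos hc hd) hS
  have hSd : c < S * d := by
    have := (div_lt_iff₀ hd).1 hS
    linarith
  set f : ℝ → ℝ := fun Λ => S * (1 - Real.exp (-Λ * d)) - Λ * c with hfdef
  have hfc : Continuous f := by
    rw [hfdef]; continuity
  have hderiv : HasDerivAt f (S * d - c) 0 := by
    have h1 : HasDerivAt (fun Λ : ℝ => -Λ * d) (-d) 0 := by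
      simpa using ((hasDerivAt_id (0:ℝ)).neg.mul_const d)
    have h2 : HasDerivAt (fun Λ : ℝ => Real.exp (-Λ * d)) (-d) 0 := by
      have := (Real.hasDerivAt_exp ((-(0:ℝ)) * d)).comp 0 h1
      simpa [Function.comp_def] using this
    have h3 : HasDerivAt (fun Λ : ℝ => S * (1 - Real.exp (-Λ * d))) (S * d) 0 := by
      have := ((hasDerivAt_const (0:ℝ) (1:ℝ)).sub h2).const_mul S
      simpa [mul_comm] using this
    rw [hfdef]
    simpa [neg_mul, Pi.sub_def] using h3.sub ((hasDerivAt_id (0:ℝ)).mul_const c)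
  have hf0 : f 0 = 0 := by simp [hfdef]
  -- find a small z > 0 with f z > 0
  have hslope := hasDerivAt_iff_tendsto_slope.1 hderiv
  have hpos_ev : ∀ᶠ z in nhdsWithin 0 (Set.Ioi (0:ℝ)), 0 < slope f 0 z := by
    have h : ∀ᶠ z in nhdsWithin (0:ℝ) {(0:ℝ)}ᶜ, 0 < slope f 0 z :=
      hslope.eventually (eventually_gt_nhds (by linarith : (0:ℝ) < S * d - c))
    exact h.filter_mono (nhdsWithin_mono _ (fun x hx => ne_of_gt hx))
  set M : ℝ := (S + 1) / c with hMdef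
  have hM : 0 < M := div_pos (by linarith) hc
  have hsmall : ∀ᶠ z in nhdsWithin 0 (Set.Ioi (0:ℝ)), z < M :=
    eventually_nhdsWithin_of_eventually_nhds (eventually_lt_nhds hM)
  have hmem : ∀ᶠ z in nhdsWithin 0 (Set.Ioi (0:ℝ)), z ∈ Set.Ioi (0:ℝ) :=
    eventually_mem_nhdsWithin
  obtain ⟨z, ⟨hz1, hz2⟩, hz0⟩ := ((hpos_ev.and hsmall).and hmem).exists
  have hz0 : 0 < z := hz0
  have hfz : 0 < f z := by
    have : slope f 0 z = f z / z := by
      rw [slope_def_field]; simp [hf0]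
    rw [this] at hz1
    rcases div_pos_iff.1 hz1 with ⟨h, _⟩ | ⟨_, h⟩
    · exact h
    · linarith
  have hfM : f M < 0 := by
    have hMc : M * c = S + 1 := div_mul_cancel₀ _ hc.ne'
    have := Real.exp_pos (-M * d)
    simp only [hfdef]
    nlinarith
  -- IVT
  have hsub := intermediate_value_Icc' (le_of_lt hz2) hfc.continuousOn
  have h0mem : (0:ℝ) ∈ Set.Icc (f M) (f z) := ⟨hfM.le, hfz.le⟩
  obtain ⟨Λ, hΛmem, hΛeq⟩ := hsub h0mem
  have hΛ0 : 0 < Λ := lt_of_lt_of_le hz0 hΛmem.1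
  have key : ∀ y : ℝ, 0 < y → (y * Qs / α = S * (1 - Real.exp (-y * d)) ↔ y * c = S * (1 - Real.exp (-y * d))) := by
    intro y hy
    rw [hcdef, mul_div_assoc]
  refine ⟨Λ, ⟨hΛ0, ?_⟩, ?_⟩
  · rw [key Λ hΛ0]
    have : f Λ = 0 := hΛeq
    simp only [hfdef] at this
    linarith
  · rintro y ⟨hy0, hyeq⟩
    rw [key y hy0] at hyeq
    have hΛroot : Λ * c = S * (1 - Real.exp (-Λ * d)) := by
      have : f Λ = 0 := hΛeq
      simp only [hfdef] at this
      linarith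
    rcases lt_trichotomy y Λ with h | h | h
    · exact absurd (stmt14_aux c d S y Λ hS0 hd hy0 h hyeq hΛroot) id
    · exact h
    · exact absurd (stmt14_aux c d S Λ y hS0 hd hΛ0 h hΛroot hyeq) id
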